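/- Uniqueness of the minimizer in the JKO scheme: if F : P₂(H) → [0,+∞] is strongly displacement convex and weakly lower semicontinuous with F not identically +∞, then for every τ > 0 and μ ∈ P₂(H) the functional ν ↦ F(ν) + (1/2τ)W₂²(ν,μ) has at most one minimizer. -/

import Mathlib

open MeasureTheory ENNReal Filter Topology Pointwise
open scoped Classical

noncomputable section

variable {H : Type*} [NormedAddCommGroup H] [InnerProductSpace ℝ H]
  [CompleteSpace H] [SecondCountableTopology H] [MeasurableSpace H] [BorelSpace H]

/-- A coupling of `μ` and `ν`: a measure on `H × H` with marginals `μ` and `ν`. -/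
def IsCoupling (P : Measure (H × H)) (μ ν : Measure H) : Prop :=
  P.map Prod.fst = μ ∧ P.map Prod.snd = ν

/-- Squared 2-Wasserstein distance, as an infimum of quadratic transport costs. -/
noncomputable def W2sq (μ ν : Measure H) : ℝ≥0∞ :=
  ⨅ (P : Measure (H × H)) (_ : IsCoupling P μ ν),
    ∫⁻ p, ENNReal.ofReal (‖p.1 - p.2‖ ^ 2) ∂P

/-- Finite second moment. -/
def HasFiniteSecondMoment (μ : Measure H) : Prop :=
  ∫⁻ x, ENNReal.ofReal (‖x‖ ^ 2) ∂μ < ⊤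

/-- Membership in the Wasserstein space `P₂(H)`. -/
def MemP2 (μ : Measure H) : Prop :=
  IsProbabilityMeasure μ ∧ HasFiniteSecondMoment μ

/-- Weak convergence of measures, in duality with bounded continuous functions. -/
def WeakConv (μs : ℕ → Measure H) (μ : Measure H) : Prop :=
  ∀ f : BoundedContinuousFunction H ℝ,
    Tendsto (fun n => ∫ x, f x ∂(μs n)) atTop (𝓝 (∫ x, f x ∂μ))

/-- Relative entropy `H(μ|γ) = ∫ ρ log ρ dγ` if `μ = ργ`, `+∞` otherwise (for probability
measures the integrand satisfies `ρ log ρ + e⁻¹ ≥ 0`, so we compute via `lintegral`). -/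
noncomputable def relEnt (μ γ : Measure H) : ℝ≥0∞ :=
  if μ ≪ γ then
    (∫⁻ x, ENNReal.ofReal ((μ.rnDeriv γ x).toReal * Real.log (μ.rnDeriv γ x).toReal
        + Real.exp (-1)) ∂γ) - ENNReal.ofReal (Real.exp (-1))
  else ⊤

/-- Strong displacement convexity of a functional on `P₂(H)`: for every base point `μbar`
and endpoints `ν₀, ν₁` there is a connecting curve, continuous in the Wasserstein distance,
along which `W₂²(·, μbar)` is convex with modulus `t(1−t)W₂²(ν₀,ν₁)` and `F` is convex. -/
def StronglyDisplacementConvex (F : Measure H → ℝ≥0∞) : Prop :=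
  ∀ μbar ν₀ ν₁ : Measure H, MemP2 μbar → MemP2 ν₀ → MemP2 ν₁ →
    ∃ ν : ℝ → Measure H,
      (∀ t ∈ Set.Icc (0:ℝ) 1, MemP2 (ν t)) ∧ ν 0 = ν₀ ∧ ν 1 = ν₁ ∧
      (∀ t₀ ∈ Set.Icc (0:ℝ) 1,
        Tendsto (fun t => W2sq (ν t) (ν t₀)) (𝓝[Set.Icc (0:ℝ) 1] t₀) (𝓝 0)) ∧
      (∀ t ∈ Set.Icc (0:ℝ) 1,
        W2sq (ν t) μbar + ENNReal.ofReal (t * (1 - t)) * W2sq ν₀ ν₁ ≤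
          ENNReal.ofReal (1 - t) * W2sq ν₀ μbar + ENNReal.ofReal t * W2sq ν₁ μbar) ∧
      (∀ t ∈ Set.Icc (0:ℝ) 1,
        F (ν t) ≤ ENNReal.ofReal (1 - t) * F ν₀ + ENNReal.ofReal t * F ν₁)

/-- Sequential lower semicontinuity of `F` with respect to weak convergence. -/
def WeaklySeqLSC (F : Measure H → ℝ≥0∞) : Prop :=
  ∀ (μs : ℕ → Measure H) (μ : Measure H), (∀ n, MemP2 (μs n)) → MemP2 μ →
    WeakConv μs μ → F μ ≤ liminf (fun n => F (μs n)) atTop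

/-- The product coupling shows that `W2sq` is finite on `P₂(H)`. -/
lemma w2sq_lt_top {μ ν : Measure H} (hμ : MemP2 μ) (hν : MemP2 ν) : W2sq μ ν < ⊤ := by
  obtain ⟨hμp, hμ2⟩ := hμ
  obtain ⟨hνp, hν2⟩ := hν
  have hcoup : IsCoupling (μ.prod ν) μ ν := by
    constructor
    · rw [Measure.map_fst_prod]; simp
    · rw [Measure.map_snd_prod]; simp
  have hb : ∀ p : H × H, ENNReal.ofReal (‖p.1 - p.2‖ ^ 2) ≤
      ENNReal.ofReal (2 * ‖p.1‖ ^ 2) + ENNReal.ofReal (2 * ‖p.2‖ ^ 2) := by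
    intro p
    rw [← ENNReal.ofReal_add (by positivity) (by positivity)]
    apply ENNReal.ofReal_le_ofReal
    nlinarith [norm_sub_le p.1 p.2, norm_nonneg p.1, norm_nonneg p.2,
      sq_nonneg (‖p.1‖ - ‖p.2‖), norm_nonneg (p.1 - p.2)]
  have m1 : Measurable fun x : H => ENNReal.ofReal (2 * ‖x‖ ^ 2) :=
    (ENNReal.continuous_ofReal.comp (by fun_prop)).measurable
  have hle : W2sq μ ν ≤ ∫⁻ p, (ENNReal.ofReal (2 * ‖p.1‖ ^ 2)
      + ENNReal.ofReal (2 * ‖p.2‖ ^ 2)) ∂(μ.prod ν) :=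
    le_trans (iInf₂_le (μ.prod ν) hcoup) (lintegral_mono hb)
  have e0 : ∫⁻ p : H × H, (ENNReal.ofReal (2 * ‖p.1‖ ^ 2)
      + ENNReal.ofReal (2 * ‖p.2‖ ^ 2)) ∂(μ.prod ν)
      = ∫⁻ p : H × H, ENNReal.ofReal (2 * ‖p.1‖ ^ 2) ∂(μ.prod ν)
        + ∫⁻ p : H × H, ENNReal.ofReal (2 * ‖p.2‖ ^ 2) ∂(μ.prod ν) :=
    lintegral_add_right _ (m1.comp measurable_snd)
  have e1 : ∫⁻ p : H × H, ENNReal.ofReal (2 * ‖p.1‖ ^ 2) ∂(μ.prod ν)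
      = ∫⁻ x, ENNReal.ofReal (2 * ‖x‖ ^ 2) ∂μ := by
    rw [← lintegral_map m1 measurable_fst, hcoup.1]
  have e2 : ∫⁻ p : H × H, ENNReal.ofReal (2 * ‖p.2‖ ^ 2) ∂(μ.prod ν)
      = ∫⁻ x, ENNReal.ofReal (2 * ‖x‖ ^ 2) ∂ν := by
    rw [← lintegral_map m1 measurable_snd, hcoup.2]
  have key : ∀ ρ : Measure H, (∫⁻ x, ENNReal.ofReal (‖x‖ ^ 2) ∂ρ < ⊤) →
      ∫⁻ x, ENNReal.ofReal (2 * ‖x‖ ^ 2) ∂ρ < ⊤ := by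
    intro ρ hρ
    have hpt : ∀ x : H, ENNReal.ofReal (2 * ‖x‖ ^ 2) = 2 * ENNReal.ofReal (‖x‖ ^ 2) := by
      intro x
      rw [ENNReal.ofReal_mul (by norm_num)]
      norm_num
    calc ∫⁻ x, ENNReal.ofReal (2 * ‖x‖ ^ 2) ∂ρ
        = ∫⁻ x, 2 * ENNReal.ofReal (‖x‖ ^ 2) ∂ρ := lintegral_congr hpt
      _ = 2 * ∫⁻ x, ENNReal.ofReal (‖x‖ ^ 2) ∂ρ :=
          lintegral_const_mul 2 ((ENNReal.continuous_ofReal.comp (by fun_prop)).measurable)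
      _ < ⊤ := ENNReal.mul_lt_top (by norm_num) hρ
  calc W2sq μ ν ≤ _ := hle
    _ < ⊤ := by
        rw [e0, e1, e2]
        exact ENNReal.add_lt_top.mpr ⟨key μ hμ2, key ν hν2⟩

/-- A key pointwise inequality in `ℝ≥0∞`: `a ≤ η + η⁻¹ * a ^ 2`. -/
lemma ennreal_le_add_inv_mul_sq {a η : ℝ≥0∞} (hη : η ≠ 0) (ha : a ≠ ⊤) :
    a ≤ η + η⁻¹ * a ^ 2 := by
  rcases le_or_gt a η with hle | hlt
  · exact le_add_right hle
  · have ha0 : a ≠ 0 := by rintro rfl; exact absurd hlt (by simp)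
    have : a ≤ η⁻¹ * a ^ 2 := by
      calc a = a⁻¹ * (a * a) := by
              rw [← mul_assoc, ENNReal.inv_mul_cancel ha0 ha, one_mul]
        _ ≤ η⁻¹ * (a * a) := mul_le_mul_left (ENNReal.inv_le_inv.mpr hlt.le) _
        _ = η⁻¹ * a ^ 2 := by rw [sq]
    exact le_add_left this

/-- The thickened indicator is `1/δ`-Lipschitz (in the transport-friendly form). -/
lemma thickenedIndicatorAux_le_add {δ : ℝ} (E : Set H) (x y : H) :
    thickenedIndicatorAux δ E x ≤
      thickenedIndicatorAux δ E y + edist x y * (ENNReal.ofReal δ)⁻¹ := by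
  unfold thickenedIndicatorAux
  set d := ENNReal.ofReal δ
  have hba : EMetric.infEdist y E / d ≤ EMetric.infEdist x E / d + edist x y / d := by
    rw [← ENNReal.add_div]
    exact ENNReal.div_le_div_right
      (by rw [edist_comm]; exact EMetric.infEdist_le_infEdist_add_edist) d
  rw [div_eq_mul_inv] at hba ⊢
  rw [tsub_le_iff_right]
  calc (1 : ℝ≥0∞) ≤ 1 - EMetric.infEdist y E * d⁻¹ + EMetric.infEdist y E * d⁻¹ :=
        le_tsub_add
    _ ≤ 1 - EMetric.infEdist y E * d⁻¹
        + (EMetric.infEdist x E * d⁻¹ + edist x y * d⁻¹) := by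
          rw [div_eq_mul_inv] at hba
          exact add_le_add_right hba _
    _ = 1 - EMetric.infEdist y E * d⁻¹ + edist x y * d⁻¹ + EMetric.infEdist x E * d⁻¹ := by
          ring

/-- One-sided comparison of integrals of thickened indicators via a coupling. -/
lemma lintegral_thickenedIndicatorAux_le_of_coupling {ν₁ ν₂ : Measure H}
    {P : Measure (H × H)} (hP1 : P.map Prod.fst = ν₁) (hP2 : P.map Prod.snd = ν₂)
    {δ : ℝ} (hδ : 0 < δ) (E : Set H) :
    ∫⁻ x, thickenedIndicatorAux δ E x ∂ν₁ ≤
      ∫⁻ x, thickenedIndicatorAux δ E x ∂ν₂ +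
        (∫⁻ p, edist p.1 p.2 ∂P) * (ENNReal.ofReal δ)⁻¹ := by
  have maux : Measurable (thickenedIndicatorAux δ E) :=
    (continuous_thickenedIndicatorAux hδ E).measurable
  have medist : Measurable fun p : H × H => edist p.1 p.2 := continuous_edist.measurable
  have step1 : ∫⁻ x, thickenedIndicatorAux δ E x ∂ν₁
      = ∫⁻ p, thickenedIndicatorAux δ E p.1 ∂P := by
    rw [← hP1, lintegral_map maux measurable_fst]
  have step2 : ∫⁻ x, thickenedIndicatorAux δ E x ∂ν₂
      = ∫⁻ p, thickenedIndicatorAux δ E p.2 ∂P := by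
    rw [← hP2, lintegral_map maux measurable_snd]
  rw [step1, step2]
  calc ∫⁻ p, thickenedIndicatorAux δ E p.1 ∂P
      ≤ ∫⁻ p, (thickenedIndicatorAux δ E p.2 + edist p.1 p.2 * (ENNReal.ofReal δ)⁻¹) ∂P :=
        lintegral_mono fun p => thickenedIndicatorAux_le_add E p.1 p.2
    _ = ∫⁻ p, thickenedIndicatorAux δ E p.2 ∂P
        + ∫⁻ p, edist p.1 p.2 * (ENNReal.ofReal δ)⁻¹ ∂P :=
        lintegral_add_right _ (medist.mul_const _)
    _ = ∫⁻ p, thickenedIndicatorAux δ E p.2 ∂P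
        + (∫⁻ p, edist p.1 p.2 ∂P) * (ENNReal.ofReal δ)⁻¹ := by
        rw [lintegral_mul_const _ medist]

/-- Probability measures at zero `W2sq`-distance coincide. -/
lemma eq_of_w2sq_eq_zero {ν₁ ν₂ : Measure H} (h1 : IsProbabilityMeasure ν₁)
    (h2 : IsProbabilityMeasure ν₂) (h : W2sq ν₁ ν₂ = 0) : ν₁ = ν₂ := by
  have mcost : Measurable fun p : H × H => ENNReal.ofReal (‖p.1 - p.2‖ ^ 2) :=
    (ENNReal.continuous_ofReal.comp (by fun_prop)).measurable
  -- Step 1: equality of integrals of thickened indicators.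
  have key : ∀ (δ : ℝ), 0 < δ → ∀ E : Set H,
      ∫⁻ x, thickenedIndicatorAux δ E x ∂ν₁ = ∫⁻ x, thickenedIndicatorAux δ E x ∂ν₂ := by
    intro δ hδ E
    set d := ENNReal.ofReal δ with hd
    have hd0 : d ≠ 0 := by
      simp only [hd, ne_eq, ENNReal.ofReal_eq_zero, not_le]; exact hδ
    have hdT : d ≠ ⊤ := ENNReal.ofReal_ne_top
    have hbdd : ∀ ρ : Measure H, IsProbabilityMeasure ρ →
        ∫⁻ x, thickenedIndicatorAux δ E x ∂ρ < ⊤ := by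
      intro ρ hρ
      calc ∫⁻ x, thickenedIndicatorAux δ E x ∂ρ
          ≤ ∫⁻ _, 1 ∂ρ := lintegral_mono (thickenedIndicatorAux_le_one δ E)
        _ = 1 := by simp
        _ < ⊤ := ENNReal.one_lt_top
    -- For each ε there is a coupling with tiny cost, giving both inequalities up to ε.
    have main : ∀ ε : NNReal, 0 < ε →
        (∫⁻ x, thickenedIndicatorAux δ E x ∂ν₁
          ≤ ∫⁻ x, thickenedIndicatorAux δ E x ∂ν₂ + ε) ∧
        (∫⁻ x, thickenedIndicatorAux δ E x ∂ν₂
          ≤ ∫⁻ x, thickenedIndicatorAux δ E x ∂ν₁ + ε) := by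
      intro ε hε
      set η : ℝ≥0∞ := (ε : ℝ≥0∞) * d / 2 with hη
      have hη0 : η ≠ 0 := by
        apply ne_of_gt
        apply ENNReal.div_pos _ (by norm_num)
        exact mul_ne_zero (by exact_mod_cast hε.ne') hd0
      have hηT : η ≠ ⊤ := by
        apply ne_of_lt
        apply ENNReal.div_lt_top _ (by norm_num)
        exact ENNReal.mul_ne_top ENNReal.coe_ne_top hdT
      have hcost : ∃ P : Measure (H × H), IsCoupling P ν₁ ν₂ ∧
          ∫⁻ p, ENNReal.ofReal (‖p.1 - p.2‖ ^ 2) ∂P < η * η := by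
        have hlt : W2sq ν₁ ν₂ < η * η := by
          rw [h]
          exact ENNReal.mul_pos hη0 hη0
        rw [W2sq, iInf_lt_iff] at hlt
        obtain ⟨P, hP⟩ := hlt
        rw [iInf_lt_iff] at hP
        obtain ⟨hPc, hPlt⟩ := hP
        exact ⟨P, hPc, hPlt⟩
      obtain ⟨P, hPc, hPlt⟩ := hcost
      have hPuniv : P Set.univ = 1 := by
        have := congrArg (fun m : Measure H => m Set.univ) hPc.1
        simp only [Measure.map_apply measurable_fst MeasurableSet.univ,
          Set.preimage_univ] at this
        rw [this, measure_univ]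
      -- bound the transport term
      have hedist : (∫⁻ p, edist p.1 p.2 ∂P) * d⁻¹ ≤ ε := by
        have hpt : ∀ p : H × H, edist p.1 p.2 ≤ η + η⁻¹ * ENNReal.ofReal (‖p.1 - p.2‖ ^ 2) := by
          intro p
          have hsq : ENNReal.ofReal (‖p.1 - p.2‖ ^ 2) = edist p.1 p.2 ^ 2 := by
            rw [edist_dist, dist_eq_norm, ← ENNReal.ofReal_pow (norm_nonneg _)]
          rw [hsq]
          exact ennreal_le_add_inv_mul_sq hη0 (edist_lt_top _ _).ne
        have hint : ∫⁻ p, edist p.1 p.2 ∂P ≤ η * 1 + η⁻¹ * (η * η) := by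
          calc ∫⁻ p, edist p.1 p.2 ∂P
              ≤ ∫⁻ p, (η + η⁻¹ * ENNReal.ofReal (‖p.1 - p.2‖ ^ 2)) ∂P :=
                lintegral_mono hpt
            _ = η * P Set.univ + η⁻¹ * ∫⁻ p, ENNReal.ofReal (‖p.1 - p.2‖ ^ 2) ∂P := by
                rw [lintegral_add_left measurable_const, lintegral_const,
                  lintegral_const_mul _ mcost]
            _ ≤ η * 1 + η⁻¹ * (η * η) := by
                rw [hPuniv]
                exact add_le_add le_rfl (mul_le_mul_right hPlt.le _)
        have hsimp : η + η⁻¹ * (η * η) = 2 * η := by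
          rw [← mul_assoc, ENNReal.inv_mul_cancel hη0 hηT, one_mul, two_mul]
        rw [mul_one] at hint
        calc (∫⁻ p, edist p.1 p.2 ∂P) * d⁻¹ ≤ (η + η⁻¹ * (η * η)) * d⁻¹ :=
              mul_le_mul_left hint _
          _ = (2 * η) * d⁻¹ := by rw [hsimp]
          _ = (ε : ℝ≥0∞) * d * d⁻¹ := by
              rw [hη, ENNReal.mul_div_cancel' (by norm_num) (by norm_num)]
          _ = ε := by
              rw [mul_assoc, ENNReal.mul_inv_cancel hd0 hdT, mul_one]
      constructor
      · calc ∫⁻ x, thickenedIndicatorAux δ E x ∂ν₁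
            ≤ ∫⁻ x, thickenedIndicatorAux δ E x ∂ν₂
              + (∫⁻ p, edist p.1 p.2 ∂P) * d⁻¹ :=
              lintegral_thickenedIndicatorAux_le_of_coupling hPc.1 hPc.2 hδ E
          _ ≤ _ := add_le_add le_rfl hedist
      · -- swap the coupling
        set P' := P.map Prod.swap with hP'
        have hP'1 : P'.map Prod.fst = ν₂ := by
          rw [hP', Measure.map_map measurable_fst measurable_swap]
          exact hPc.2
        have hP'2 : P'.map Prod.snd = ν₁ := by
          rw [hP', Measure.map_map measurable_snd measurable_swap]
          exact hPc.1
        have hed' : ∫⁻ p, edist p.1 p.2 ∂P' = ∫⁻ p, edist p.1 p.2 ∂P := by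
          rw [hP', lintegral_map continuous_edist.measurable measurable_swap]
          simp only [Prod.fst_swap, Prod.snd_swap]
          exact lintegral_congr fun p => edist_comm _ _
        calc ∫⁻ x, thickenedIndicatorAux δ E x ∂ν₂
            ≤ ∫⁻ x, thickenedIndicatorAux δ E x ∂ν₁
              + (∫⁻ p, edist p.1 p.2 ∂P') * d⁻¹ :=
              lintegral_thickenedIndicatorAux_le_of_coupling hP'1 hP'2 hδ E
          _ ≤ _ := add_le_add le_rfl (by rw [hed']; exact hedist)
    apply le_antisymm
    · exact ENNReal.le_of_forall_pos_le_add fun ε hε _ => (main ε hε).1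
    · exact ENNReal.le_of_forall_pos_le_add fun ε hε _ => (main ε hε).2
  -- Step 2: equality on closed sets.
  have closed_eq : ∀ E : Set H, IsClosed E → ν₁ E = ν₂ E := by
    intro E hE
    have t1 := tendsto_lintegral_thickenedIndicator_of_isClosed (μ := ν₁) hE
      (δs := fun n : ℕ => (1 : ℝ) / (n + 1)) (fun n => Nat.one_div_pos_of_nat)
      tendsto_one_div_add_atTop_nhds_zero_nat
    have t2 := tendsto_lintegral_thickenedIndicator_of_isClosed (μ := ν₂) hE
      (δs := fun n : ℕ => (1 : ℝ) / (n + 1)) (fun n => Nat.one_div_pos_of_nat)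
      tendsto_one_div_add_atTop_nhds_zero_nat
    have hfun : (fun n : ℕ => lintegral ν₁
          fun ω => (thickenedIndicator (Nat.one_div_pos_of_nat (n := n)) E ω : ℝ≥0∞))
        = fun n : ℕ => lintegral ν₂
          fun ω => (thickenedIndicator (Nat.one_div_pos_of_nat (n := n)) E ω : ℝ≥0∞) := by
      funext n
      have hco : ∀ (ρ : Measure H), (lintegral ρ
            fun ω => (thickenedIndicator (Nat.one_div_pos_of_nat (n := n)) E ω : ℝ≥0∞))
          = ∫⁻ ω, thickenedIndicatorAux ((1 : ℝ) / (n + 1)) E ω ∂ρ := by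
        intro ρ
        apply lintegral_congr
        intro x
        rw [thickenedIndicator_apply, ENNReal.coe_toNNReal thickenedIndicatorAux_lt_top.ne]
      rw [hco ν₁, hco ν₂, key _ Nat.one_div_pos_of_nat E]
    rw [hfun] at t1
    exact tendsto_nhds_unique t1 t2
  -- Step 3: π-system argument.
  refine ext_of_generate_finite {s : Set H | IsClosed s} ?_ isPiSystem_isClosed
    (fun s hs => closed_eq s hs) (closed_eq _ isClosed_univ)
  rw [BorelSpace.measurable_eq (α := H), borel_eq_generateFrom_isClosed]

/-- Uniqueness of the minimizer in the JKO scheme for a strongly displacement convex,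
weakly lower semicontinuous functional which is not identically `+∞` on `P₂(H)`. -/
theorem jko_minimizer_unique (F : Measure H → ℝ≥0∞)
    (hF : StronglyDisplacementConvex F) (hlsc : WeaklySeqLSC F)
    (hne : ∃ μ : Measure H, MemP2 μ ∧ F μ < ⊤)
    (τ : ℝ) (hτ : 0 < τ) (μ : Measure H) (hμ : MemP2 μ) :
    ∀ ν₁ ν₂ : Measure H, MemP2 ν₁ → MemP2 ν₂ →
      (∀ σ : Measure H, MemP2 σ →
        F ν₁ + (ENNReal.ofReal (2 * τ))⁻¹ * W2sq ν₁ μ ≤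
          F σ + (ENNReal.ofReal (2 * τ))⁻¹ * W2sq σ μ) →
      (∀ σ : Measure H, MemP2 σ →
        F ν₂ + (ENNReal.ofReal (2 * τ))⁻¹ * W2sq ν₂ μ ≤
          F σ + (ENNReal.ofReal (2 * τ))⁻¹ * W2sq σ μ) →
      ν₁ = ν₂ := by
  intro ν₁ ν₂ hν₁ hν₂ hmin₁ hmin₂
  set c := (ENNReal.ofReal (2 * τ))⁻¹ with hc
  have h2τ : (0 : ℝ) < 2 * τ := by linarith
  have hc0 : c ≠ 0 := by
    rw [hc]
    simp [ENNReal.inv_ne_zero, ENNReal.mul_eq_top]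
  have hcT : c ≠ ⊤ := by
    rw [hc]
    rw [ENNReal.inv_ne_top]
    simpa [ENNReal.ofReal_eq_zero] using h2τ
  obtain ⟨μ₀, hμ₀, hFμ₀⟩ := hne
  have hJfin : F ν₁ + c * W2sq ν₁ μ < ⊤ := by
    refine lt_of_le_of_lt (hmin₁ μ₀ hμ₀) ?_
    exact ENNReal.add_lt_top.mpr ⟨hFμ₀,
      ENNReal.mul_lt_top hcT.lt_top (w2sq_lt_top hμ₀ hμ)⟩
  have hJeq : F ν₂ + c * W2sq ν₂ μ = F ν₁ + c * W2sq ν₁ μ :=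
    le_antisymm (hmin₂ ν₁ hν₁) (hmin₁ ν₂ hν₂)
  obtain ⟨ν, hmem, h0, h1, _, hW, hFc⟩ := hF μ ν₁ ν₂ hμ hν₁ hν₂
  have ht : (1 : ℝ) / 2 ∈ Set.Icc (0 : ℝ) 1 := by norm_num
  have hW' := hW (1 / 2) ht
  have hFc' := hFc (1 / 2) ht
  have e14 : (1 : ℝ) / 2 * (1 - 1 / 2) = 1 / 4 := by norm_num
  have e12 : (1 : ℝ) - 1 / 2 = 1 / 2 := by norm_num
  rw [e14, e12] at hW'
  rw [e12] at hFc'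
  have hmid := hmem (1 / 2) ht
  have hminmid := hmin₁ (ν (1 / 2)) hmid
  have halfhalf : ENNReal.ofReal (1 / 2) + ENNReal.ofReal (1 / 2) = 1 := by
    rw [← ENNReal.ofReal_add (by norm_num) (by norm_num)]
    norm_num
  set X := c * (ENNReal.ofReal (1 / 4) * W2sq ν₁ ν₂) with hX
  have chain : (F ν₁ + c * W2sq ν₁ μ) + X ≤ (F ν₁ + c * W2sq ν₁ μ) + 0 := by
    calc (F ν₁ + c * W2sq ν₁ μ) + X
        ≤ (F (ν (1 / 2)) + c * W2sq (ν (1 / 2)) μ) + X := add_le_add hminmid le_rfl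
      _ = F (ν (1 / 2)) + c * (W2sq (ν (1 / 2)) μ + ENNReal.ofReal (1 / 4) * W2sq ν₁ ν₂) := by
          rw [hX]; ring
      _ ≤ (ENNReal.ofReal (1 / 2) * F ν₁ + ENNReal.ofReal (1 / 2) * F ν₂)
          + c * (ENNReal.ofReal (1 / 2) * W2sq ν₁ μ + ENNReal.ofReal (1 / 2) * W2sq ν₂ μ) :=
          add_le_add hFc' (mul_le_mul_right hW' c)
      _ = ENNReal.ofReal (1 / 2) * (F ν₁ + c * W2sq ν₁ μ)
          + ENNReal.ofReal (1 / 2) * (F ν₂ + c * W2sq ν₂ μ) := by ring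
      _ = (ENNReal.ofReal (1 / 2) + ENNReal.ofReal (1 / 2)) * (F ν₁ + c * W2sq ν₁ μ) := by
          rw [hJeq]; ring
      _ = (F ν₁ + c * W2sq ν₁ μ) + 0 := by rw [halfhalf, one_mul, add_zero]
  have hX0 : X = 0 := by
    have := (ENNReal.add_le_add_iff_left hJfin.ne).mp chain
    exact le_antisymm this zero_le
  have hW0 : W2sq ν₁ ν₂ = 0 := by
    rw [hX] at hX0
    rcases mul_eq_zero.mp hX0 with h' | h'
    · exact absurd h' hc0
    · rcases mul_eq_zero.mp h' with h'' | h''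
      · exact absurd h'' (by simp [ENNReal.ofReal_eq_zero])
      · exact h''
  exact eq_of_w2sq_eq_zero hν₁.1 hν₂.1 hW0
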